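/- Let L be a triangulation of S² and let C be a set of three vertices of L that are pairwise joined by edges of L, such that C does not span a 2-simplex of L and C is not the vertex set of the link of any vertex of L. Then the set of vertices of L not in C can be partitioned into two sets V₁ and V₂, each containing at least two vertices, such that no edge of L has one endpoint in V₁ and the other in V₂. -/

import Mathlib

open Finset

/-- A combinatorial triangulation of the 2-sphere: a finite simplicial complex all of
whose maximal simplices are 2-simplices (triangles), such that every edge is contained
in exactly two 2-simplices, the link of every vertex is connected, the complex is
connected, and the Euler characteristic is `2`.  By the classification of closed
surfaces, these conditions hold precisely when the geometric realization of the
complex is homeomorphic to `S²`.  The complex is recorded by its set of 2-simplices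
(`faces`); its simplices are the vertices, the edges (2-element subsets of faces) and
the faces. -/
structure S2Triangulation (V : Type) [Fintype V] [DecidableEq V] : Type where
  /-- The 2-simplices. -/
  faces : Finset (Finset V)
  card_eq_three : ∀ f ∈ faces, f.card = 3
  /-- Every vertex lies in some 2-simplex. -/
  vertex_mem : ∀ v : V, ∃ f ∈ faces, v ∈ f
  /-- Every edge lies in exactly two 2-simplices. -/
  edge_two_faces : ∀ e : Finset V, e.card = 2 → (∃ f ∈ faces, e ⊆ f) →
    (faces.filter fun f => e ⊆ f).card = 2
  /-- The link of every vertex is connected (so, with the other axioms, a cycle). -/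
  link_connected : ∀ s u w : V,
    (s ≠ u ∧ ∃ f ∈ faces, s ∈ f ∧ u ∈ f) →
    (s ≠ w ∧ ∃ f ∈ faces, s ∈ f ∧ w ∈ f) →
    Relation.ReflTransGen (fun a b : V => a ≠ b ∧ ({s, a, b} : Finset V) ∈ faces) u w
  /-- The complex is connected. -/
  conn : ∀ u w : V,
    Relation.ReflTransGen (fun a b : V => a ≠ b ∧ ∃ f ∈ faces, a ∈ f ∧ b ∈ f) u w
  /-- Euler characteristic 2:  #vertices - #edges + #faces = 2. -/
  euler : Fintype.card V + faces.card
      = (Finset.univ.filter fun e : Finset V => e.card = 2 ∧ ∃ f ∈ faces, e ⊆ f).card + 2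

namespace S2Triangulation

variable {V : Type} [Fintype V] [DecidableEq V]

/-- Two vertices are adjacent (joined by an edge of `L`) if they are distinct and lie
in a common 2-simplex. -/
def Adj (L : S2Triangulation V) (u w : V) : Prop :=
  u ≠ w ∧ ∃ f ∈ L.faces, u ∈ f ∧ w ∈ f

instance (L : S2Triangulation V) (u w : V) : Decidable (L.Adj u w) :=
  inferInstanceAs (Decidable (u ≠ w ∧ ∃ f ∈ L.faces, u ∈ f ∧ w ∈ f))

/-- The vertex set of the link of a vertex `s`. -/
def linkVerts (L : S2Triangulation V) (s : V) : Finset V :=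
  Finset.univ.filter fun u => L.Adj s u

/-- An edge labeling of `L`: an assignment of an integer `m u w = m w u ≥ 2` to each
edge `{u, w}` of `L`. -/
structure EdgeLabeling (L : S2Triangulation V) : Type where
  m : V → V → ℕ
  symm : ∀ u w : V, m u w = m w u
  two_le : ∀ u w : V, L.Adj u w → 2 ≤ m u w

/-- The labeled complex is metric flag: three pairwise adjacent (distinct) vertices
span a 2-simplex if and only if the sum of the reciprocals of the three labels
exceeds `1`. -/
def MetricFlag (L : S2Triangulation V) (M : EdgeLabeling L) : Prop :=
  ∀ s t u : V, L.Adj s t → L.Adj t u → L.Adj u s →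
    (({s, t, u} : Finset V) ∈ L.faces ↔
      1 < (M.m s t : ℚ)⁻¹ + (M.m t u : ℚ)⁻¹ + (M.m u s : ℚ)⁻¹)

/-- `s` is a 3-Euclidean vertex: it has valence 3 and its link is a 3-cycle
`s₀, s₁, s₂` with `1/m s₀ s₁ + 1/m s₁ s₂ + 1/m s₂ s₀ = 1`. -/
def Is3Euclidean (L : S2Triangulation V) (M : EdgeLabeling L) (s : V) : Prop :=
  ∃ s0 s1 s2 : V, s0 ≠ s1 ∧ s1 ≠ s2 ∧ s0 ≠ s2 ∧
    L.linkVerts s = {s0, s1, s2} ∧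
    ({s, s0, s1} : Finset V) ∈ L.faces ∧ ({s, s1, s2} : Finset V) ∈ L.faces ∧
    ({s, s2, s0} : Finset V) ∈ L.faces ∧
    (M.m s0 s1 : ℚ)⁻¹ + (M.m s1 s2 : ℚ)⁻¹ + (M.m s2 s0 : ℚ)⁻¹ = 1

/-- The link of `s` is the 4-cycle `s₀, s₁, s₂, s₃` and all four consecutive labels
are `2`; i.e. `s` is 4-Euclidean with link 4-cycle `s₀, s₁, s₂, s₃`. -/
def Is4EuclideanCycle (L : S2Triangulation V) (M : EdgeLabeling L)
    (s s0 s1 s2 s3 : V) : Prop :=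
  s0 ≠ s1 ∧ s0 ≠ s2 ∧ s0 ≠ s3 ∧ s1 ≠ s2 ∧ s1 ≠ s3 ∧ s2 ≠ s3 ∧
  L.linkVerts s = {s0, s1, s2, s3} ∧
  ({s, s0, s1} : Finset V) ∈ L.faces ∧ ({s, s1, s2} : Finset V) ∈ L.faces ∧
  ({s, s2, s3} : Finset V) ∈ L.faces ∧ ({s, s3, s0} : Finset V) ∈ L.faces ∧
  ({s, s0, s2} : Finset V) ∉ L.faces ∧ ({s, s1, s3} : Finset V) ∉ L.faces ∧
  M.m s0 s1 = 2 ∧ M.m s1 s2 = 2 ∧ M.m s2 s3 = 2 ∧ M.m s3 s0 = 2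

/-- `s` is a 4-Euclidean vertex: it has valence 4 and its link is a 4-cycle
`s₀, s₁, s₂, s₃` with `m sᵢ sᵢ₊₁ = 2` for `i = 0, 1, 2, 3` (mod 4). -/
def Is4Euclidean (L : S2Triangulation V) (M : EdgeLabeling L) (s : V) : Prop :=
  ∃ s0 s1 s2 s3 : V, Is4EuclideanCycle L M s s0 s1 s2 s3

/-- A Euclidean vertex is one that is 3-Euclidean or 4-Euclidean. -/
def IsEuclidean (L : S2Triangulation V) (M : EdgeLabeling L) (s : V) : Prop :=
  Is3Euclidean L M s ∨ Is4Euclidean L M s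

/-- `s₀, s₁, s₂, s₃` is an empty Euclidean 4-circuit: a 4-cycle in the 1-skeleton with
all four labels `2`, which is not the vertex set of the link of any vertex and is not
the boundary of the union of two 2-simplices of `L` sharing an edge. -/
def IsEmptyEuclidean4Circuit (L : S2Triangulation V) (M : EdgeLabeling L)
    (s0 s1 s2 s3 : V) : Prop :=
  s0 ≠ s1 ∧ s0 ≠ s2 ∧ s0 ≠ s3 ∧ s1 ≠ s2 ∧ s1 ≠ s3 ∧ s2 ≠ s3 ∧
  L.Adj s0 s1 ∧ L.Adj s1 s2 ∧ L.Adj s2 s3 ∧ L.Adj s3 s0 ∧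
  M.m s0 s1 = 2 ∧ M.m s1 s2 = 2 ∧ M.m s2 s3 = 2 ∧ M.m s3 s0 = 2 ∧
  (∀ x : V, L.linkVerts x ≠ {s0, s1, s2, s3}) ∧
  ¬ ((({s0, s1, s2} : Finset V) ∈ L.faces ∧ ({s0, s2, s3} : Finset V) ∈ L.faces) ∨
     (({s1, s2, s3} : Finset V) ∈ L.faces ∧ ({s1, s3, s0} : Finset V) ∈ L.faces))

/-- `L` is the suspension of the `n`-gon `c₀, …, c_{n-1}` with suspension points
`p, q`: the vertex set of `L` is `{p, q, c₀, …, c_{n-1}}` (all distinct), `p` and `q`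
are not joined by an edge, `c₀, …, c_{n-1}` is an `n`-cycle in the 1-skeleton, and
the 2-simplices of `L` are exactly the sets `{p, cᵢ, cᵢ₊₁}` and `{q, cᵢ, cᵢ₊₁}`
for `i` mod `n`. -/
def IsSuspensionCycle (L : S2Triangulation V) {n : ℕ} (p q : V) (c : ZMod n → V) :
    Prop :=
  p ≠ q ∧ Function.Injective c ∧ (∀ i, p ≠ c i) ∧ (∀ i, q ≠ c i) ∧
  (∀ v : V, v = p ∨ v = q ∨ ∃ i, v = c i) ∧
  ¬ L.Adj p q ∧ (∀ i, L.Adj (c i) (c (i + 1))) ∧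
  (∀ f : Finset V, f ∈ L.faces ↔
    ∃ i, f = {p, c i, c (i + 1)} ∨ f = {q, c i, c (i + 1)})

/-- `L` is the suspension of an `n`-gon. -/
def IsSuspensionOfNGon (L : S2Triangulation V) (n : ℕ) : Prop :=
  ∃ (p q : V) (c : ZMod n → V), IsSuspensionCycle L p q c

end S2Triangulation


namespace S2Sep
open S2Triangulation
set_option linter.unusedSectionVars false

variable {V : Type} [Fintype V] [DecidableEq V] (L : S2Triangulation V)

lemma exists_third {f : Finset V} (hf : f ∈ L.faces) {x y : V} (hx : x ∈ f) (hy : y ∈ f)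
    (hxy : x ≠ y) : ∃ z, z ≠ x ∧ z ≠ y ∧ f = {x, y, z} := by
  have h3 := L.card_eq_three f hf
  have hyx : y ∈ f.erase x := Finset.mem_erase.mpr ⟨hxy.symm, hy⟩
  have h2 : (f.erase x).card = 2 := by rw [Finset.card_erase_of_mem hx, h3]
  have h1 : ((f.erase x).erase y).card = 1 := by
    rw [Finset.card_erase_of_mem hyx, h2]
  obtain ⟨z, hz⟩ := Finset.card_eq_one.mp h1
  have hzm : z ∈ (f.erase x).erase y := by rw [hz]; exact Finset.mem_singleton_self z
  refine ⟨z, (Finset.mem_erase.mp (Finset.mem_erase.mp hzm).2).1, (Finset.mem_erase.mp hzm).1, ?_⟩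
  have : f = insert x (insert y ((f.erase x).erase y)) := by
    rw [Finset.insert_erase hyx, Finset.insert_erase hx]
  rw [this, hz]

lemma filter_pair {e f g : Finset V} (he : e.card = 2) (hf : f ∈ L.faces) (hg : g ∈ L.faces)
    (hef : e ⊆ f) (heg : e ⊆ g) (hfg : f ≠ g) :
    L.faces.filter (fun h => e ⊆ h) = {f, g} := by
  have h2 : (L.faces.filter fun h => e ⊆ h).card = 2 :=
    L.edge_two_faces e he ⟨f, hf, hef⟩
  refine (Finset.eq_of_subset_of_card_le ?_ ?_).symm
  · intro x hx
    rcases Finset.mem_insert.mp hx with h | h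
    · subst h; exact Finset.mem_filter.mpr ⟨hf, hef⟩
    · rw [Finset.mem_singleton.mp h]; exact Finset.mem_filter.mpr ⟨hg, heg⟩
  · rw [h2, Finset.card_pair hfg]

lemma opposite_face {e f : Finset V} (he : e.card = 2) (hf : f ∈ L.faces) (hef : e ⊆ f) :
    ∃ g ∈ L.faces, g ≠ f ∧ e ⊆ g := by
  have h2 : (L.faces.filter fun h => e ⊆ h).card = 2 :=
    L.edge_two_faces e he ⟨f, hf, hef⟩
  obtain ⟨g, hg, hgf⟩ := Finset.exists_mem_ne (by rw [h2]; exact one_lt_two) f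
  have := Finset.mem_filter.mp hg
  exact ⟨g, this.1, hgf, this.2⟩

/-- members of a face are pairwise distinct or equal; a face has three elements. -/
lemma mem_triple_ne {s x y : V} (hf : ({s, x, y} : Finset V) ∈ L.faces) :
    s ≠ x ∧ s ≠ y ∧ x ≠ y := by
  have h3 := L.card_eq_three _ hf
  refine ⟨?_, ?_, ?_⟩ <;> rintro rfl
  · rw [show ({s, s, y} : Finset V) = {s, y} by ext t; simp] at h3
    have := Finset.card_insert_le s ({y} : Finset V); simp at this; omega
  · rw [show ({s, x, s} : Finset V) = {s, x} by ext t; simp; tauto] at h3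
    have := Finset.card_insert_le s ({x} : Finset V); simp at this; omega
  · rw [show ({s, x, x} : Finset V) = {s, x} by ext t; simp] at h3
    have := Finset.card_insert_le s ({x} : Finset V); simp at this; omega

/-- star connectivity: any two faces containing `v` are joined by a chain of faces
containing `v`, consecutive ones sharing an edge through `v`. -/
lemma starConn (v : V) :
    ∀ f g, f ∈ L.faces → g ∈ L.faces → v ∈ f → v ∈ g →
    Relation.ReflTransGen (fun p q : Finset V =>
      p ∈ L.faces ∧ q ∈ L.faces ∧ ∃ w, w ≠ v ∧ v ∈ p ∧ w ∈ p ∧ v ∈ q ∧ w ∈ q) f g := by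
  intro f g hf hg hvf hvg
  -- get x ∈ f, x ≠ v and x' ∈ g, x' ≠ v
  have h3f := L.card_eq_three f hf
  have h3g := L.card_eq_three g hg
  obtain ⟨x, hxf, hxv⟩ := Finset.exists_mem_ne (by omega : 1 < f.card) v
  obtain ⟨x', hx'g, hx'v⟩ := Finset.exists_mem_ne (by omega : 1 < g.card) v
  have hchain := L.link_connected v x x' ⟨fun h => hxv h.symm, f, hf, hvf, hxf⟩
    ⟨fun h => hx'v h.symm, g, hg, hvg, hx'g⟩
  -- induct along the chain
  have key : ∀ z, Relation.ReflTransGen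
      (fun a b : V => a ≠ b ∧ ({v, a, b} : Finset V) ∈ L.faces) x z →
      ∀ p, p ∈ L.faces → v ∈ p → z ∈ p →
      Relation.ReflTransGen (fun p q : Finset V =>
        p ∈ L.faces ∧ q ∈ L.faces ∧ ∃ w, w ≠ v ∧ v ∈ p ∧ w ∈ p ∧ v ∈ q ∧ w ∈ q) f p := by
    intro z hz
    induction hz with
    | refl =>
      intro p hp hvp hxp
      exact Relation.ReflTransGen.single ⟨hf, hp, x, hxv, hvf, hxf, hvp, hxp⟩
    | @tail b c' hub step ih =>
      intro p hp hvp hc'p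
      obtain ⟨hbc, hm⟩ := step
      obtain ⟨hvb, hvc, _⟩ := mem_triple_ne L hm
      have hbm : b ∈ ({v, b, c'} : Finset V) := by simp
      have hc'm : c' ∈ ({v, b, c'} : Finset V) := by simp
      have hvm : v ∈ ({v, b, c'} : Finset V) := by simp
      have h1 := ih ({v, b, c'}) hm hvm hbm
      exact h1.tail ⟨hm, hp, c', fun h => hvc h.symm, hvm, hc'm, hvp, hc'p⟩
  exact key x' hchain g hg hvg hx'g

/-- dual connectivity: any two faces are joined by a chain of faces,
consecutive ones sharing two vertices. -/
lemma dualConn :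
    ∀ f g, f ∈ L.faces → g ∈ L.faces →
    Relation.ReflTransGen (fun p q : Finset V =>
      p ∈ L.faces ∧ q ∈ L.faces ∧ ∃ w w', w ≠ w' ∧ w ∈ p ∧ w' ∈ p ∧ w ∈ q ∧ w' ∈ q) f g := by
  intro f g hf hg
  have hRv : ∀ (v : V) (p q : Finset V), p ∈ L.faces → q ∈ L.faces → v ∈ p → v ∈ q →
      Relation.ReflTransGen (fun p q : Finset V =>
        p ∈ L.faces ∧ q ∈ L.faces ∧ ∃ w w', w ≠ w' ∧ w ∈ p ∧ w' ∈ p ∧ w ∈ q ∧ w' ∈ q) p q := by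
    intro v p q hp hq hvp hvq
    refine Relation.ReflTransGen.mono ?_ _ _ (starConn L v p q hp hq hvp hvq)
    rintro p' q' ⟨h1, h2, w, hwv, h4, h5, h6, h7⟩
    exact ⟨h1, h2, v, w, fun h => hwv h.symm, h4, h5, h6, h7⟩
  have h3f := L.card_eq_three f hf
  obtain ⟨v, hvf⟩ := Finset.card_pos.mp (by omega : 0 < f.card)
  have h3g := L.card_eq_three g hg
  obtain ⟨w, hwg⟩ := Finset.card_pos.mp (by omega : 0 < g.card)
  have hchain := L.conn v w
  have key : ∀ z, Relation.ReflTransGen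
      (fun a b : V => a ≠ b ∧ ∃ m ∈ L.faces, a ∈ m ∧ b ∈ m) v z →
      ∀ p, p ∈ L.faces → z ∈ p →
      Relation.ReflTransGen (fun p q : Finset V =>
        p ∈ L.faces ∧ q ∈ L.faces ∧ ∃ w w', w ≠ w' ∧ w ∈ p ∧ w' ∈ p ∧ w ∈ q ∧ w' ∈ q) f p := by
    intro z hz
    induction hz with
    | refl => intro p hp hvp; exact hRv v f p hf hp hvf hvp
    | @tail b c' hub step ih =>
      intro p hp hc'p
      obtain ⟨hbc, m, hm, hbm, hc'm⟩ := step
      exact (ih m hm hbm).trans (hRv c' m p hm hp hc'm hc'p)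
  exact key w hchain g hg hwg

/-! ### The chain complex mod 2 -/

def ES : Finset (Finset V) := Finset.univ.filter fun e => e.card = 2 ∧ ∃ f ∈ L.faces, e ⊆ f

lemma ES_card {e : Finset V} (he : e ∈ ES L) : e.card = 2 :=
  ((Finset.mem_filter.mp he).2).1

lemma mem_ES {e f : Finset V} (he : e.card = 2) (hf : f ∈ L.faces) (hef : e ⊆ f) :
    e ∈ ES L := Finset.mem_filter.mpr ⟨Finset.mem_univ e, he, f, hf, hef⟩

lemma pair_mem_ES {x y : V} (h : L.Adj x y) : ({x, y} : Finset V) ∈ ES L := by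
  obtain ⟨hxy, f, hf, hx, hy⟩ := h
  refine mem_ES L (Finset.card_pair hxy) hf ?_
  intro t ht
  rcases Finset.mem_insert.mp ht with h | h
  · subst h; exact hx
  · rw [Finset.mem_singleton.mp h]; exact hy

abbrev Fc := {f : Finset V // f ∈ L.faces}
abbrev Ed := {e : Finset V // e ∈ ES L}

def d2 : (Fc L → ZMod 2) →ₗ[ZMod 2] (Ed L → ZMod 2) :=
  (Matrix.of fun (e : Ed L) (f : Fc L) => if e.1 ⊆ f.1 then (1 : ZMod 2) else 0).mulVecLin

def d1 : (Ed L → ZMod 2) →ₗ[ZMod 2] (V → ZMod 2) :=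
  (Matrix.of fun (v : V) (e : Ed L) => if v ∈ e.1 then (1 : ZMod 2) else 0).mulVecLin

def sm : (V → ZMod 2) →ₗ[ZMod 2] ZMod 2 where
  toFun y := ∑ v, y v
  map_add' x y := by simp [Finset.sum_add_distrib]
  map_smul' c x := by simp [Finset.mul_sum]

lemma d2_apply (u : Fc L → ZMod 2) (e : Ed L) :
    d2 L u e = ∑ f ∈ Finset.univ.filter (fun f : Fc L => e.1 ⊆ f.1), u f := by
  simp [d2, Matrix.mulVecLin_apply, Matrix.mulVec, dotProduct, boole_mul,
    Finset.sum_filter]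

lemma d1_apply (x : Ed L → ZMod 2) (v : V) :
    d1 L x v = ∑ e ∈ Finset.univ.filter (fun e : Ed L => v ∈ e.1), x e := by
  simp [d1, Matrix.mulVecLin_apply, Matrix.mulVec, dotProduct, boole_mul,
    Finset.sum_filter]

lemma exists_pairF {e : Finset V} (he : e ∈ ES L) :
    ∃ f g : Fc L, f ≠ g ∧ e ⊆ f.1 ∧ e ⊆ g.1 := by
  obtain ⟨-, he2, f, hf, hef⟩ := Finset.mem_filter.mp he
  obtain ⟨g, hg, hgf, heg⟩ := opposite_face L he2 hf hef
  exact ⟨⟨f, hf⟩, ⟨g, hg⟩, fun h => hgf (congrArg Subtype.val h).symm, hef, heg⟩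

lemma filter_subtype {e : Finset V} (he2 : e.card = 2) {f g : Fc L} (hfg : f ≠ g)
    (hef : e ⊆ f.1) (heg : e ⊆ g.1) :
    Finset.univ.filter (fun h : Fc L => e ⊆ h.1) = {f, g} := by
  have hval : f.1 ≠ g.1 := fun h => hfg (Subtype.ext h)
  have hfil := filter_pair L he2 f.2 g.2 hef heg hval
  ext h
  simp only [Finset.mem_filter, Finset.mem_univ, true_and, Finset.mem_insert,
    Finset.mem_singleton]
  constructor
  · intro hh
    have hmem : h.1 ∈ L.faces.filter (fun m => e ⊆ m) := Finset.mem_filter.mpr ⟨h.2, hh⟩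
    rw [hfil] at hmem
    rcases Finset.mem_insert.mp hmem with h1 | h1
    · exact Or.inl (Subtype.ext h1)
    · exact Or.inr (Subtype.ext (Finset.mem_singleton.mp h1))
  · rintro (rfl | rfl)
    · exact hef
    · exact heg

lemma d2_pair (u : Fc L → ZMod 2) {e : Finset V} (he : e ∈ ES L) {f g : Fc L} (hfg : f ≠ g)
    (hef : e ⊆ f.1) (heg : e ⊆ g.1) : d2 L u ⟨e, he⟩ = u f + u g := by
  rw [d2_apply, filter_subtype L (ES_card L he) hfg hef heg, Finset.sum_pair hfg]

lemma zmod2_eq {x y : ZMod 2} (h : x + y = 0) : x = y := by revert h; revert x y; decide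

lemma u_eq (u r : _) (hu : d2 L u = r) {e : Finset V} (he : e ∈ ES L) (hre : r ⟨e, he⟩ = 0)
    {f g : Fc L} (hef : e ⊆ f.1) (heg : e ⊆ g.1) : u f = u g := by
  by_cases hfg : f = g
  · rw [hfg]
  · have h := d2_pair L u he hfg hef heg
    rw [hu, hre] at h
    exact zmod2_eq h.symm


lemma pair_subset {x y : V} {f : Finset V} (hx : x ∈ f) (hy : y ∈ f) :
    ({x, y} : Finset V) ⊆ f := by
  intro t ht
  rcases Finset.mem_insert.mp ht with h | h
  · subst h; exact hx
  · rw [Finset.mem_singleton.mp h]; exact hy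

lemma u_const_star (u : Fc L → ZMod 2) (r : Ed L → ZMod 2) (hu : d2 L u = r) (v : V)
    (hr : ∀ (e : Finset V) (he : e ∈ ES L), v ∈ e → r ⟨e, he⟩ = 0)
    (f g : Fc L) (hvf : v ∈ f.1) (hvg : v ∈ g.1) : u f = u g := by
  have key : ∀ (z : Finset V), Relation.ReflTransGen (fun p q : Finset V =>
      p ∈ L.faces ∧ q ∈ L.faces ∧ ∃ w, w ≠ v ∧ v ∈ p ∧ w ∈ p ∧ v ∈ q ∧ w ∈ q) f.1 z →
      ∀ hz : z ∈ L.faces, u f = u ⟨z, hz⟩ := by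
    intro z hz
    induction hz with
    | refl => intro h1; exact congrArg u (Subtype.ext rfl)
    | @tail b z hub step ih =>
      intro hz1
      obtain ⟨hb, hzf, w, hwv, hvb, hwb, hvz, hwz⟩ := step
      have hce : ({v, w} : Finset V).card = 2 := Finset.card_pair (fun h => hwv h.symm)
      have hes : ({v, w} : Finset V) ∈ ES L := mem_ES L hce hb (pair_subset hvb hwb)
      have heq : u ⟨b, hb⟩ = u ⟨z, hz1⟩ :=
        u_eq L u r hu hes (hr _ hes (Finset.mem_insert_self v _))
          (pair_subset hvb hwb) (pair_subset hvz hwz)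
      rw [← heq]; exact ih hb
  exact key g.1 (starConn L v f.1 g.1 f.2 g.2 hvf hvg) g.2

lemma u_const (u : Fc L → ZMod 2) (hu : d2 L u = 0) (f g : Fc L) : u f = u g := by
  have key : ∀ (z : Finset V), Relation.ReflTransGen (fun p q : Finset V =>
      p ∈ L.faces ∧ q ∈ L.faces ∧ ∃ w w', w ≠ w' ∧ w ∈ p ∧ w' ∈ p ∧ w ∈ q ∧ w' ∈ q) f.1 z →
      ∀ hz : z ∈ L.faces, u f = u ⟨z, hz⟩ := by
    intro z hz
    induction hz with
    | refl => intro h1; exact congrArg u (Subtype.ext rfl)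
    | @tail b z hub step ih =>
      intro hz1
      obtain ⟨hb, hzf, w, w', hww, hwb, hw'b, hwz, hw'z⟩ := step
      have hce : ({w, w'} : Finset V).card = 2 := Finset.card_pair hww
      have hes : ({w, w'} : Finset V) ∈ ES L := mem_ES L hce hb (pair_subset hwb hw'b)
      have heq : u ⟨b, hb⟩ = u ⟨z, hz1⟩ :=
        u_eq L u 0 hu hes rfl (pair_subset hwb hw'b) (pair_subset hwz hw'z)
      rw [← heq]; exact ih hb
  exact key g.1 (dualConn L f.1 g.1 f.2 g.2) g.2

lemma d2_one : d2 L (fun _ => (1 : ZMod 2)) = 0 := by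
  funext e
  obtain ⟨f, g, hfg, hef, heg⟩ := exists_pairF L e.2
  have h := d2_pair L (fun _ => (1 : ZMod 2)) e.2 hfg hef heg
  have h2 : (1 : ZMod 2) + 1 = 0 := by decide
  simpa [h2] using h

lemma ker_d2 (f₀ : Fc L) :
    LinearMap.ker (d2 L) = Submodule.span (ZMod 2) {(fun _ => 1 : Fc L → ZMod 2)} := by
  apply le_antisymm
  · intro u hu
    have hmem : u = u f₀ • (fun _ => 1 : Fc L → ZMod 2) := by
      funext g
      have := u_const L u (LinearMap.mem_ker.mp hu) g f₀
      simp [this]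
    rw [hmem]
    exact Submodule.smul_mem _ _ (Submodule.mem_span_singleton_self _)
  · rw [Submodule.span_le]
    intro x hx
    rw [Set.mem_singleton_iff.mp hx]
    exact LinearMap.mem_ker.mpr (d2_one L)


lemma pair_of_mem_card_two {e : Finset V} (he : e.card = 2) {v : V} (hv : v ∈ e) :
    ∃ w, w ≠ v ∧ e = {v, w} := by
  have h1 : (e.erase v).card = 1 := by rw [Finset.card_erase_of_mem hv, he]
  obtain ⟨w, hw⟩ := Finset.card_eq_one.mp h1
  have hwm : w ∈ e.erase v := hw ▸ Finset.mem_singleton_self w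
  refine ⟨w, (Finset.mem_erase.mp hwm).1, ?_⟩
  have h2 : e = insert v (e.erase v) := (Finset.insert_erase hv).symm
  rw [h2, hw]

/-- around any vertex of a face there are exactly two edges of the face;
mod 2 the count is zero. -/
lemma sum_edges_at_vertex (v : V) (f : Fc L) :
    ∑ e : Ed L, (if v ∈ e.1 ∧ e.1 ⊆ f.1 then (1 : ZMod 2) else 0) = 0 := by
  classical
  rw [Finset.sum_boole]
  by_cases hvf : v ∈ f.1
  · have himg : Finset.univ.filter (fun e : Ed L => v ∈ e.1 ∧ e.1 ⊆ f.1) =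
        (f.1.erase v).attach.image (fun y =>
          (⟨{v, y.1}, mem_ES L (Finset.card_pair
              (fun h => (Finset.mem_erase.mp y.2).1 h.symm)) f.2
            (pair_subset hvf (Finset.mem_of_mem_erase y.2))⟩ : Ed L)) := by
      ext e
      simp only [Finset.mem_filter, Finset.mem_univ, true_and, Finset.mem_image,
        Finset.mem_attach, true_and]
      constructor
      · rintro ⟨hve, hef⟩
        obtain ⟨w, hwv, hew⟩ := pair_of_mem_card_two (ES_card L e.2) hve
        have hwe : w ∈ e.1 := by rw [hew]; simp
        have hwf : w ∈ f.1.erase v := Finset.mem_erase.mpr ⟨hwv, hef hwe⟩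
        exact ⟨⟨w, hwf⟩, Subtype.ext hew.symm⟩
      · rintro ⟨y, rfl⟩
        exact ⟨Finset.mem_insert_self v _, pair_subset hvf (Finset.mem_of_mem_erase y.2)⟩
    rw [himg, Finset.card_image_of_injOn, Finset.card_attach,
      Finset.card_erase_of_mem hvf, L.card_eq_three f.1 f.2]
    · decide
    · intro y _ y' _ hyy
      have : ({v, y.1} : Finset V) = {v, y'.1} := congrArg Subtype.val hyy
      have hy : y.1 ∈ ({v, y'.1} : Finset V) := by rw [← this]; simp
      rcases Finset.mem_insert.mp hy with h | h
      · exact absurd h (Finset.mem_erase.mp y.2).1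
      · exact Subtype.ext (Finset.mem_singleton.mp h)
  · have : Finset.univ.filter (fun e : Ed L => v ∈ e.1 ∧ e.1 ⊆ f.1) = ∅ := by
      rw [Finset.filter_eq_empty_iff]
      rintro e - ⟨hve, hef⟩
      exact hvf (hef hve)
    rw [this]; simp

lemma range_d2_le_ker_d1 : LinearMap.range (d2 L) ≤ LinearMap.ker (d1 L) := by
  rintro - ⟨u, rfl⟩
  rw [LinearMap.mem_ker]
  funext v
  rw [d1_apply]
  have h1 : ∀ e : Ed L, d2 L u e = ∑ f : Fc L, (if e.1 ⊆ f.1 then u f else 0) := by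
    intro e; rw [d2_apply, Finset.sum_filter]
  calc (∑ e ∈ Finset.univ.filter (fun e : Ed L => v ∈ e.1), d2 L u e)
      = ∑ e : Ed L, (if v ∈ e.1 then ∑ f : Fc L, (if e.1 ⊆ f.1 then u f else 0) else 0) := by
        rw [← Finset.sum_filter]
        exact Finset.sum_congr rfl fun e he => h1 e
    _ = ∑ f : Fc L, ∑ e : Ed L, (if v ∈ e.1 ∧ e.1 ⊆ f.1 then (1:ZMod 2) else 0) * u f := by
        rw [Finset.sum_comm]
        apply Finset.sum_congr rfl
        intro e _
        by_cases hv : v ∈ e.1 <;> simp [hv, Finset.sum_ite, Finset.mul_sum, mul_comm]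
    _ = ∑ f : Fc L, (∑ e : Ed L, (if v ∈ e.1 ∧ e.1 ⊆ f.1 then (1:ZMod 2) else 0)) * u f := by
        apply Finset.sum_congr rfl; intro f _; rw [Finset.sum_mul]
    _ = 0 := by
        apply Finset.sum_eq_zero; intro f _; rw [sum_edges_at_vertex, zero_mul]

lemma sm_d1 (x : Ed L → ZMod 2) : sm (d1 L x) = 0 := by
  show (∑ v, d1 L x v) = 0
  have : ∀ v, d1 L x v = ∑ e : Ed L, (if v ∈ e.1 then x e else 0) := by
    intro v; rw [d1_apply, Finset.sum_filter]
  rw [Finset.sum_congr rfl fun v _ => this v, Finset.sum_comm]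
  apply Finset.sum_eq_zero
  intro e _
  rw [Finset.sum_ite_mem, Finset.univ_inter, Finset.sum_const, ES_card L e.2, two_nsmul]
  exact CharTwo.add_self_eq_zero _

lemma sm_single (v : V) : sm (Pi.single v (1 : ZMod 2)) = 1 := by
  show (∑ w, Pi.single v (1 : ZMod 2) w) = 1
  simp [Pi.single_apply]

lemma d1_single {b c : V} (hadj : L.Adj b c) :
    d1 L (Pi.single (⟨{b, c}, pair_mem_ES L hadj⟩ : Ed L) (1 : ZMod 2))
      = Pi.single b 1 + Pi.single c 1 := by
  set e₀ : Ed L := ⟨{b, c}, pair_mem_ES L hadj⟩ with he₀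
  funext v
  rw [d1_apply]
  have : ∀ e : Ed L, (Pi.single e₀ 1 : Ed L → ZMod 2) e = if e = e₀ then 1 else 0 := by
    intro e; simp [Pi.single_apply]
  rw [Finset.sum_congr rfl fun e _ => this e, Finset.sum_ite_eq' _ e₀ (fun _ => 1)]
  have hbc : b ≠ c := hadj.1
  simp only [Finset.mem_filter, Finset.mem_univ, true_and, he₀]
  by_cases hb : v = b
  · subst hb; simp [hbc, Pi.single_apply]
  · by_cases hc : v = c
    · subst hc; simp [Ne.symm hbc, Pi.single_apply]
    · simp [hb, hc, Pi.single_apply]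

lemma edge_path (u w : V) :
    Pi.single u (1 : ZMod 2) + Pi.single w 1 ∈ LinearMap.range (d1 L) := by
  have hconn := L.conn u w
  induction hconn with
  | refl =>
    have : (Pi.single u 1 : V → ZMod 2) + Pi.single u 1 = 0 := by
      funext v; simp [CharTwo.add_self_eq_zero]
    rw [this]; exact Submodule.zero_mem _
  | @tail b c' hub step ih =>
    have hadj : L.Adj b c' := ⟨step.1, step.2⟩
    have hsplit : (Pi.single u 1 : V → ZMod 2) + Pi.single c' 1
        = ((Pi.single u 1 : V → ZMod 2) + Pi.single b 1)
          + ((Pi.single b 1 : V → ZMod 2) + Pi.single c' 1) := by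
      funext v
      have h2 : ∀ x y z : ZMod 2, x + z = (x + y) + (y + z) := by decide
      simp only [Pi.add_apply]
      exact h2 _ _ _
    rw [hsplit]
    exact Submodule.add_mem _ ih ⟨_, d1_single L hadj⟩

lemma zmod2_two : (1 : ZMod 2) + 1 = 0 := by decide

lemma zmod2_ne_zero {x : ZMod 2} (h : x ≠ 0) : x = 1 := by revert h; revert x; decide

lemma ker_sm_le_range_d1 :
    ∀ (n : ℕ) (y : V → ZMod 2), (Finset.univ.filter fun v => y v ≠ 0).card ≤ n →
      sm y = 0 → y ∈ LinearMap.range (d1 L) := by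
  intro n
  induction n with
  | zero =>
    intro y hcard _
    have hy : y = 0 := by
      funext v
      by_contra hv
      have : v ∈ Finset.univ.filter fun v => y v ≠ 0 := Finset.mem_filter.mpr ⟨Finset.mem_univ v, hv⟩
      have := Finset.card_pos.mpr ⟨v, this⟩
      omega
    rw [hy]; exact Submodule.zero_mem _
  | succ n ih =>
    intro y hcard hsum
    set S := Finset.univ.filter fun v => y v ≠ 0 with hS
    by_cases hSe : S = ∅
    · have hy : y = 0 := by
        funext v
        by_contra hv
        have : v ∈ S := Finset.mem_filter.mpr ⟨Finset.mem_univ v, hv⟩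
        rw [hSe] at this; exact absurd this (Finset.notMem_empty v)
      rw [hy]; exact Submodule.zero_mem _
    · obtain ⟨u, hu⟩ := Finset.nonempty_iff_ne_empty.mpr hSe
      by_cases h2 : ∃ w ∈ S, w ≠ u
      · obtain ⟨w, hw, hwu⟩ := h2
        set y' : V → ZMod 2 := y + Pi.single u 1 + Pi.single w 1 with hy'
        have hyu : y u = 1 := zmod2_ne_zero (Finset.mem_filter.mp hu).2
        have hyw : y w = 1 := zmod2_ne_zero (Finset.mem_filter.mp hw).2
        have hsum' : sm y' = 0 := by
          rw [hy', map_add, map_add, hsum, sm_single, sm_single]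
          decide
        have hsupp : (Finset.univ.filter fun v => y' v ≠ 0) = (S.erase u).erase w := by
          ext v
          simp only [Finset.mem_filter, Finset.mem_univ, true_and, Finset.mem_erase, hS]
          by_cases hvu : v = u
          · subst hvu
            simp [hy', Pi.single_apply, hwu.symm, hyu, Ne.symm hwu, zmod2_two]
          · by_cases hvw : v = w
            · subst hvw
              simp [hy', Pi.single_apply, hvu, hyw, hwu, zmod2_two]
            · simp [hy', Pi.single_apply, hvu, hvw, Ne.symm hvu, Ne.symm hvw, zmod2_two]
        have hcard' : (Finset.univ.filter fun v => y' v ≠ 0).card ≤ n := by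
          rw [hsupp]
          have h1 : u ∈ S := hu
          have hwe : w ∈ S.erase u := Finset.mem_erase.mpr ⟨hwu, hw⟩
          rw [Finset.card_erase_of_mem hwe, Finset.card_erase_of_mem h1]
          omega
        have hmem := ih y' hcard' hsum'
        have hrec : y = y' + (Pi.single u 1 + Pi.single w 1) := by
          funext v
          simp only [hy', Pi.add_apply]
          have h2' : ∀ a p q : ZMod 2, a = ((a + p) + q) + (p + q) := by decide
          exact h2' _ _ _
        rw [hrec]
        exact Submodule.add_mem _ hmem (edge_path L u w)
      · push_neg at h2
        have hSu : S = {u} := by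
          apply Finset.eq_singleton_iff_unique_mem.mpr
          exact ⟨hu, fun w hw => h2 w hw⟩
        have : sm y = y u := by
          show (∑ v, y v) = y u
          apply Finset.sum_eq_single u
          · intro v _ hvu
            by_contra hv
            have : v ∈ S := Finset.mem_filter.mpr ⟨Finset.mem_univ v, hv⟩
            rw [hSu] at this
            exact hvu (Finset.mem_singleton.mp this)
          · intro h; exact absurd (Finset.mem_univ u) h
        rw [hsum] at this
        exact absurd this.symm (Finset.mem_filter.mp hu).2


lemma sm_single' (v : V) (z : ZMod 2) : sm (Pi.single v z) = z := by
  show (∑ w, Pi.single v z w) = z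
  simp [Pi.single_apply]

lemma jordan (f₀ : Fc L) : LinearMap.ker (d1 L) ≤ LinearMap.range (d2 L) := by
  obtain ⟨v₀, hv₀⟩ := Finset.card_pos.mp
    (by rw [L.card_eq_three f₀.1 f₀.2]; omega : 0 < f₀.1.card)
  have hV : Nonempty V := ⟨v₀⟩
  -- rank-nullity for d2
  have hone : (fun _ => 1 : Fc L → ZMod 2) ≠ 0 := by
    intro h
    have := congrFun h f₀
    exact one_ne_zero this
  have h1 : Module.finrank (ZMod 2) (LinearMap.range (d2 L)) + 1 = L.faces.card := by
    have h := LinearMap.finrank_range_add_finrank_ker (d2 L)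
    rw [ker_d2 L f₀, finrank_span_singleton hone, Module.finrank_pi, Fintype.card_coe] at h
    exact h
  -- rank-nullity for sm
  have hsm_surj : Function.Surjective (sm (V := V)) := by
    intro z
    exact ⟨Pi.single v₀ z, sm_single' v₀ z⟩
  have h2 : 1 + Module.finrank (ZMod 2) (LinearMap.ker (sm (V := V))) = Fintype.card V := by
    have h := LinearMap.finrank_range_add_finrank_ker (sm (V := V))
    rw [LinearMap.range_eq_top.mpr hsm_surj, finrank_top, Module.finrank_self,
      Module.finrank_pi] at h
    exact h
  -- range d1 = ker sm
  have h3 : LinearMap.range (d1 L) = LinearMap.ker (sm (V := V)) := by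
    apply le_antisymm
    · rintro - ⟨x, rfl⟩
      exact LinearMap.mem_ker.mpr (sm_d1 L x)
    · intro y hy
      exact ker_sm_le_range_d1 L _ y le_rfl (LinearMap.mem_ker.mp hy)
  -- rank-nullity for d1
  have h4 : Module.finrank (ZMod 2) (LinearMap.range (d1 L))
      + Module.finrank (ZMod 2) (LinearMap.ker (d1 L)) = (ES L).card := by
    have h := LinearMap.finrank_range_add_finrank_ker (d1 L)
    rw [Module.finrank_pi, Fintype.card_coe] at h
    exact h
  rw [h3] at h4
  have heuler : Fintype.card V + L.faces.card = (ES L).card + 2 := L.euler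
  have hle : Module.finrank (ZMod 2) (LinearMap.ker (d1 L))
      ≤ Module.finrank (ZMod 2) (LinearMap.range (d2 L)) := by omega
  rw [Submodule.eq_of_le_of_finrank_le (range_d2_le_ker_d1 L) hle]


lemma three_le_link (x : V) : 3 ≤ (L.linkVerts x).card := by
  obtain ⟨f, hf, hxf⟩ := L.vertex_mem x
  have h3 := L.card_eq_three f hf
  obtain ⟨p, hpf, hpx⟩ := Finset.exists_mem_ne (by omega : 1 < f.card) x
  obtain ⟨q, hqx, hqp, hfq⟩ := exists_third L hf hxf hpf (fun h => hpx h.symm)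
  have hpair : ({x, p} : Finset V).card = 2 := Finset.card_pair (fun h => hpx h.symm)
  obtain ⟨g, hg, hgf, hsg⟩ := opposite_face L hpair hf (pair_subset hxf hpf)
  have hxg : x ∈ g := hsg (Finset.mem_insert_self x {p})
  have hpg : p ∈ g := hsg (by simp)
  obtain ⟨r, hrx, hrp, hgr⟩ := exists_third L hg hxg hpg (fun h => hpx h.symm)
  have hrq : r ≠ q := by
    intro h; apply hgf; rw [hgr, hfq, h]
  have hqf : q ∈ f := by rw [hfq]; simp
  have hrg : r ∈ g := by rw [hgr]; simp
  have hsub : ({p, q, r} : Finset V) ⊆ L.linkVerts x := by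
    intro t ht
    rw [S2Triangulation.linkVerts, Finset.mem_filter]
    refine ⟨Finset.mem_univ t, ?_⟩
    rcases Finset.mem_insert.mp ht with h | h
    · subst h; exact ⟨fun h => hpx h.symm, f, hf, hxf, hpf⟩
    · rcases Finset.mem_insert.mp h with h' | h'
      · subst h'; exact ⟨fun h => hqx h.symm, f, hf, hxf, hqf⟩
      · rw [Finset.mem_singleton.mp h']; exact ⟨fun h => hrx h.symm, g, hg, hxg, hrg⟩
  have hcard : ({p, q, r} : Finset V).card = 3 := by
    rw [Finset.card_insert_of_notMem, Finset.card_insert_of_notMem, Finset.card_singleton]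
    · simp [hrq.symm]
    · simp only [Finset.mem_insert, Finset.mem_singleton]
      push_neg
      exact ⟨fun h => hqp h.symm, fun h => hrp h.symm⟩
  calc 3 = ({p, q, r} : Finset V).card := hcard.symm
    _ ≤ (L.linkVerts x).card := Finset.card_le_card hsub

end S2Sep

open S2Triangulation in
/-- Let `L` be a triangulation of `S²` and let `C = {a, b, c}` be
a set of three vertices of `L` that are pairwise joined by edges of `L`, such that
`C` does not span a 2-simplex of `L` and `C` is not the vertex set of the link of
any vertex of `L`.  Then the vertices of `L` not in `C` can be partitioned into two
sets `V₁` and `V₂`, each with at least two elements, such that no edge of `L` joins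
a vertex of `V₁` to a vertex of `V₂`. -/
theorem empty_three_circuit_separates {V : Type} [Fintype V] [DecidableEq V]
    (L : S2Triangulation V) (a b c : V)
    (hab : L.Adj a b) (hbc : L.Adj b c) (hac : L.Adj a c)
    (hnf : ({a, b, c} : Finset V) ∉ L.faces)
    (hnl : ∀ x : V, L.linkVerts x ≠ {a, b, c}) :
    ∃ V1 V2 : Finset V,
      V1 ∪ V2 = Finset.univ \ {a, b, c} ∧ V1 ∩ V2 = ∅ ∧
      2 ≤ V1.card ∧ 2 ≤ V2.card ∧
      ∀ u ∈ V1, ∀ w ∈ V2, ¬ L.Adj u w := by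
  classical
  obtain ⟨f0, hf0, haf0⟩ := L.vertex_mem a
  set C : Finset V := {a, b, c} with hC
  -- the three circuit edges
  set eab : S2Sep.Ed L := ⟨{a, b}, S2Sep.pair_mem_ES L hab⟩ with heab
  set ebc : S2Sep.Ed L := ⟨{b, c}, S2Sep.pair_mem_ES L hbc⟩ with hebc
  set eac : S2Sep.Ed L := ⟨{a, c}, S2Sep.pair_mem_ES L hac⟩ with heac
  have hne1 : eab ≠ ebc := by
    intro h
    have hv : ({a, b} : Finset V) = {b, c} := congrArg Subtype.val h
    have ha : a ∈ ({b, c} : Finset V) := by rw [← hv]; simp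
    rcases Finset.mem_insert.mp ha with h' | h'
    · exact hab.1 h'
    · exact hac.1 (Finset.mem_singleton.mp h')
  have hne2 : eab ≠ eac := by
    intro h
    have hv : ({a, b} : Finset V) = {a, c} := congrArg Subtype.val h
    have hb : b ∈ ({a, c} : Finset V) := by rw [← hv]; simp
    rcases Finset.mem_insert.mp hb with h' | h'
    · exact hab.1 h'.symm
    · exact hbc.1 (Finset.mem_singleton.mp h')
  have hne3 : ebc ≠ eac := by
    intro h
    have hv : ({b, c} : Finset V) = {a, c} := congrArg Subtype.val h
    have hb : b ∈ ({a, c} : Finset V) := by rw [← hv]; simp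
    rcases Finset.mem_insert.mp hb with h' | h'
    · exact hab.1 h'.symm
    · exact hbc.1 (Finset.mem_singleton.mp h')
  set cC : S2Sep.Ed L → ZMod 2 :=
    (Pi.single eab 1 : S2Sep.Ed L → ZMod 2) + Pi.single ebc 1 + Pi.single eac 1 with hcC
  -- cC is a cycle
  have hd1 : S2Sep.d1 L cC = 0 := by
    rw [hcC, map_add, map_add, S2Sep.d1_single L hab, S2Sep.d1_single L hbc,
      S2Sep.d1_single L hac]
    funext v
    simp only [Pi.add_apply, Pi.zero_apply, Pi.single_apply]
    have hz : ∀ x y z : ZMod 2, ((x + y) + (y + z)) + (x + z) = 0 := by decide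
    exact hz _ _ _
  -- hence it bounds: obtain the 2-chain u
  obtain ⟨u, hu⟩ := S2Sep.jordan L ⟨f0, hf0⟩ (LinearMap.mem_ker.mpr hd1)
  have hcCab : cC eab = 1 := by
    rw [hcC]
    simp [Pi.single_apply, hne1, hne2]
  -- cC vanishes on edges having a vertex off C
  have hzero : ∀ (e : Finset V) (he : e ∈ S2Sep.ES L),
      (∃ v ∈ e, v ∉ C) → cC ⟨e, he⟩ = 0 := by
    rintro e he ⟨v, hve, hvC⟩
    have h1 : (⟨e, he⟩ : S2Sep.Ed L) ≠ eab := by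
      intro h
      apply hvC
      have hv : e = {a, b} := congrArg Subtype.val h
      rw [hv] at hve
      rcases Finset.mem_insert.mp hve with h' | h'
      · rw [h']; simp [hC]
      · rw [Finset.mem_singleton.mp h']; simp [hC]
    have h2 : (⟨e, he⟩ : S2Sep.Ed L) ≠ ebc := by
      intro h
      apply hvC
      have hv : e = {b, c} := congrArg Subtype.val h
      rw [hv] at hve
      rcases Finset.mem_insert.mp hve with h' | h'
      · rw [h']; simp [hC]
      · rw [Finset.mem_singleton.mp h']; simp [hC]
    have h3 : (⟨e, he⟩ : S2Sep.Ed L) ≠ eac := by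
      intro h
      apply hvC
      have hv : e = {a, c} := congrArg Subtype.val h
      rw [hv] at hve
      rcases Finset.mem_insert.mp hve with h' | h'
      · rw [h']; simp [hC]
      · rw [Finset.mem_singleton.mp h']; simp [hC]
    rw [hcC]
    simp [Pi.single_apply, h1, h2, h3]
  -- the 2-chain u is constant around every vertex off C
  have hconst : ∀ v, v ∉ C → ∀ f g : S2Sep.Fc L, v ∈ f.1 → v ∈ g.1 → u f = u g :=
    fun v hv f g => S2Sep.u_const_star L u cC hu v
      (fun e he hve => hzero e he ⟨v, hve, hv⟩) f g
  -- the two sides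
  set P : V → Prop := fun v => ∃ f ∈ L.faces, v ∈ f ∧
      (if hf : f ∈ L.faces then u ⟨f, hf⟩ else 0) = 1 with hP
  set V1 : Finset V := (Finset.univ \ C).filter P with hV1
  set V2 : Finset V := (Finset.univ \ C).filter (fun v => ¬ P v) with hV2
  have hval : ∀ (v : V), v ∉ C → ∀ (f : Finset V) (hf : f ∈ L.faces), v ∈ f →
      (v ∈ V1 ↔ u ⟨f, hf⟩ = 1) := by
    intro v hv f hf hvf
    constructor
    · intro hv1
      obtain ⟨g, hg, hvg, hug⟩ := (Finset.mem_filter.mp hv1).2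
      rw [dif_pos hg] at hug
      rw [hconst v hv ⟨f, hf⟩ ⟨g, hg⟩ hvf hvg]
      exact hug
    · intro hu1
      refine Finset.mem_filter.mpr ⟨Finset.mem_sdiff.mpr ⟨Finset.mem_univ v, hv⟩,
        f, hf, hvf, ?_⟩
      rw [dif_pos hf]
      exact hu1
  have hmemV2 : ∀ v, v ∈ V2 ↔ (v ∈ Finset.univ \ C ∧ v ∉ V1) := by
    intro v
    rw [hV2, Finset.mem_filter, hV1, Finset.mem_filter]
    constructor
    · rintro ⟨h1, h2⟩; exact ⟨h1, fun h => h2 h.2⟩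
    · rintro ⟨h1, h2⟩; exact ⟨h1, fun hp => h2 ⟨h1, hp⟩⟩
  -- nonemptiness of both sides
  have hoff : ∀ f : S2Sep.Fc L, ∃ v ∈ f.1, v ∉ C := by
    intro f
    have hC3 : C.card ≤ 3 := by
      have h1 := Finset.card_insert_le a ({b, c} : Finset V)
      have h2 := Finset.card_insert_le b ({c} : Finset V)
      rw [hC]
      simp only [Finset.card_singleton] at h1 h2 ⊢
      omega
    have hns : ¬ f.1 ⊆ C := by
      intro hsub
      have heq : f.1 = C := Finset.eq_of_subset_of_card_le hsub
        (by rw [L.card_eq_three f.1 f.2]; exact hC3)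
      have := f.2
      rw [heq, hC] at this
      exact hnf this
    exact Finset.not_subset.mp hns
  have hex1 : ∃ f : S2Sep.Fc L, u f = 1 := by
    by_contra h
    push_neg at h
    have hzero' : u = 0 := by
      funext f
      rcases (by decide : ∀ x : ZMod 2, x = 0 ∨ x = 1) (u f) with h' | h'
      · exact h'
      · exact absurd h' (h f)
    rw [hzero', map_zero] at hu
    have := congrFun hu eab
    rw [hcCab] at this
    exact one_ne_zero this.symm
  have hex0 : ∃ f : S2Sep.Fc L, u f = 0 := by
    by_contra h
    push_neg at h
    have hone' : u = fun _ => 1 := funext fun f => S2Sep.zmod2_ne_zero (h f)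
    rw [hone', S2Sep.d2_one L] at hu
    have := congrFun hu eab
    rw [hcCab] at this
    exact one_ne_zero this.symm
  obtain ⟨F1, hF1⟩ := hex1
  obtain ⟨F0, hF0⟩ := hex0
  obtain ⟨v1, hv1f, hv1C⟩ := hoff F1
  obtain ⟨v0, hv0f, hv0C⟩ := hoff F0
  have hv1V1 : v1 ∈ V1 := (hval v1 hv1C F1.1 F1.2 hv1f).mpr (by
    convert hF1 using 2)
  have hv0V2 : v0 ∈ V2 := by
    rw [hmemV2]
    refine ⟨Finset.mem_sdiff.mpr ⟨Finset.mem_univ v0, hv0C⟩, ?_⟩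
    intro hmem
    have := (hval v0 hv0C F0.1 F0.2 hv0f).mp hmem
    rw [show (⟨F0.1, F0.2⟩ : S2Sep.Fc L) = F0 from Subtype.ext rfl, hF0] at this
    exact one_ne_zero this.symm
  -- no edges between the sides
  have hnoedge : ∀ w1 ∈ V1, ∀ w2 ∈ V2, ¬ L.Adj w1 w2 := by
    intro w1 hw1 w2 hw2 hA
    obtain ⟨hne, f, hf, hw1f, hw2f⟩ := hA
    have h1C : w1 ∉ C := (Finset.mem_sdiff.mp (Finset.mem_filter.mp hw1).1).2
    have h2C : w2 ∉ C := (Finset.mem_sdiff.mp ((hmemV2 w2).mp hw2).1).2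
    have hu1 : u ⟨f, hf⟩ = 1 := (hval w1 h1C f hf hw1f).mp hw1
    have hmem : w2 ∈ V1 := (hval w2 h2C f hf hw2f).mpr hu1
    exact ((hmemV2 w2).mp hw2).2 hmem
  -- each side has at least two vertices
  have hbig : ∀ x : V, x ∉ C → (∀ y, L.Adj x y → y ∉ C → False) → False := by
    intro x hxC hiso
    apply hnl x
    have hsub : L.linkVerts x ⊆ C := by
      intro y hy
      have hAxy : L.Adj x y := (Finset.mem_filter.mp hy).2
      by_contra hyC
      exact hiso y hAxy hyC
    have h3 := S2Sep.three_le_link L x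
    have hC3 : C.card ≤ 3 := by
      have h1 := Finset.card_insert_le a ({b, c} : Finset V)
      have h2 := Finset.card_insert_le b ({c} : Finset V)
      rw [hC]
      simp only [Finset.card_singleton] at h1 h2 ⊢
      omega
    exact Finset.eq_of_subset_of_card_le hsub (by omega)
  have hcard1 : 2 ≤ V1.card := by
    by_contra h
    push_neg at h
    have hpos : 0 < V1.card := Finset.card_pos.mpr ⟨v1, hv1V1⟩
    have h1 : V1.card = 1 := by omega
    obtain ⟨x, hx⟩ := Finset.card_eq_one.mp h1
    have hxV1 : x ∈ V1 := by rw [hx]; exact Finset.mem_singleton_self x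
    have hxC : x ∉ C := (Finset.mem_sdiff.mp (Finset.mem_filter.mp hxV1).1).2
    apply hbig x hxC
    intro y hAxy hyC
    obtain ⟨hne, f, hf, hxf, hyf⟩ := hAxy
    have hux : u ⟨f, hf⟩ = 1 := (hval x hxC f hf hxf).mp hxV1
    have hyV1 : y ∈ V1 := (hval y hyC f hf hyf).mpr hux
    rw [hx] at hyV1
    exact hne (Finset.mem_singleton.mp hyV1).symm
  have hcard2 : 2 ≤ V2.card := by
    by_contra h
    push_neg at h
    have hpos : 0 < V2.card := Finset.card_pos.mpr ⟨v0, hv0V2⟩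
    have h1 : V2.card = 1 := by omega
    obtain ⟨x, hx⟩ := Finset.card_eq_one.mp h1
    have hxV2 : x ∈ V2 := by rw [hx]; exact Finset.mem_singleton_self x
    have hxC : x ∉ C := (Finset.mem_sdiff.mp ((hmemV2 x).mp hxV2).1).2
    apply hbig x hxC
    intro y hAxy hyC
    obtain ⟨hne, f, hf, hxf, hyf⟩ := hAxy
    have hux : u ⟨f, hf⟩ = 0 := by
      by_contra h'
      exact ((hmemV2 x).mp hxV2).2 ((hval x hxC f hf hxf).mpr (S2Sep.zmod2_ne_zero h'))
    have hyV2 : y ∈ V2 := by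
      rw [hmemV2]
      refine ⟨Finset.mem_sdiff.mpr ⟨Finset.mem_univ y, hyC⟩, ?_⟩
      intro hmem
      have := (hval y hyC f hf hyf).mp hmem
      rw [hux] at this
      exact one_ne_zero this.symm
    rw [hx] at hyV2
    exact hne (Finset.mem_singleton.mp hyV2).symm
  refine ⟨V1, V2, ?_, ?_, hcard1, hcard2, hnoedge⟩
  · rw [hV1, hV2]
    exact Finset.filter_union_filter_not_eq P (Finset.univ \ C)
  · rw [hV1, hV2]
    exact Finset.disjoint_iff_inter_eq_empty.mp
      (Finset.disjoint_filter_filter_not (Finset.univ \ C) (Finset.univ \ C) P)
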